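/- Let G be a solvable p-group of exponent p^l and derived length d, and H ≤ Aut(G) with [g,ₙh] = 1 for all g ∈ G and h ∈ H. Then H has exponent bounded by a function f(p^l, n, d). -/

import Mathlib

open Finset in
lemma aux_abelian {A : Type} [AddCommGroup A] (q n m : ℕ) (hexp : ∀ a : A, q • a = 0)
    (hm : ∀ i, 0 < i → i < n → q ∣ m.choose i)
    (φ : AddMonoid.End A) (hu : ∀ a : A, ((φ - 1) ^ n) a = 0) (a : A) : (φ ^ m) a = a := by
  have key : φ ^ m = ∑ i ∈ range (m + 1),
      ((φ - 1) ^ i) * ((m.choose i : ℕ) : AddMonoid.End A) := by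
    conv_lhs => rw [← sub_add_cancel φ 1, Commute.add_pow (Commute.one_right _)]
    simp
  rw [key, show (∑ i ∈ range (m + 1), ((φ - 1) ^ i) * ((m.choose i : ℕ) : AddMonoid.End A)) a
      = ∑ i ∈ range (m + 1), (((φ - 1) ^ i) * ((m.choose i : ℕ) : AddMonoid.End A)) a from
      AddMonoidHom.finset_sum_apply _ _ _]
  rw [Finset.sum_eq_single_of_mem 0 (Finset.mem_range.2 (Nat.succ_pos m))]
  · simp only [pow_zero, Nat.choose_zero_right, Nat.cast_one, mul_one]
    exact AddMonoid.End.one_apply a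
  · intro i _ hi0
    have hi0' : 0 < i := Nat.pos_of_ne_zero hi0
    rw [AddMonoid.End.coe_mul, Function.comp_apply]
    rcases lt_or_ge i n with hin | hni
    · obtain ⟨t, ht⟩ := hm i hi0' hin
      have hz : ((m.choose i : ℕ) : AddMonoid.End A) a = 0 := by
        rw [AddMonoid.End.natCast_apply, ht, mul_smul, hexp]
      rw [hz, map_zero]
    · have hpow : (φ - 1) ^ i = (φ - 1) ^ (i - n) * (φ - 1) ^ n := by
        rw [← pow_add, Nat.sub_add_cancel hni]
      rw [hpow, AddMonoid.End.coe_mul, Function.comp_apply, hu, map_zero]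

lemma aux_abelian_mul {Q : Type} [CommGroup Q] (q n m : ℕ) (hexp : ∀ a : Q, a ^ q = 1)
    (hm : ∀ i, 0 < i → i < n → q ∣ m.choose i)
    (φ : Q →* Q) (hu : ∀ a : Q, (fun x => x⁻¹ * φ x)^[n] a = 1) (a : Q) :
    (⇑φ)^[m] a = a := by
  set ψ : AddMonoid.End (Additive Q) := (MonoidHom.toAdditive φ : Additive Q →+ Additive Q)
    with hψ
  have happ : ∀ x : Additive Q, ψ x = Additive.ofMul (φ (Additive.toMul x)) := fun x => rfl
  have h1 : ∀ x : Additive Q, (ψ - 1) x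
      = Additive.ofMul ((Additive.toMul x)⁻¹ * φ (Additive.toMul x)) := by
    intro x
    rw [show (ψ - 1) x = ψ x - (1 : AddMonoid.End (Additive Q)) x from AddMonoidHom.sub_apply _ _ _,
      AddMonoid.End.one_apply, sub_eq_iff_eq_add, happ]
    conv_rhs => rw [← ofMul_toMul x]
    rw [← ofMul_mul, Equiv.apply_eq_iff_eq]
    simp only [toMul_ofMul]
    rw [mul_comm ((Additive.toMul x)⁻¹), inv_mul_cancel_right]
  have hfun2 : ⇑(ψ - 1) = (fun x : Q => x⁻¹ * φ x) := funext fun x => h1 x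
  have hexp' : ∀ x : Additive Q, q • x = 0 := by
    intro x
    rw [← ofMul_toMul x, ← ofMul_pow, hexp]
    rfl
  have hu' : ∀ x : Additive Q, ((ψ - 1) ^ n) x = 0 := by
    intro x
    rw [AddMonoid.End.coe_pow, hfun2]
    exact hu x
  have h2 := aux_abelian q n m hexp' hm ψ hu' a
  rw [AddMonoid.End.coe_pow] at h2
  exact h2

lemma aux_dvd {p : ℕ} (hp : p.Prime) (l n i : ℕ) (h0 : 0 < i) (hin : i < n) :
    p ^ l ∣ ((p ^ l) ^ (n + 1)).choose i := by
  rcases Nat.eq_zero_or_pos l with rfl | hl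
  · simp
  rw [← pow_mul]
  have hn1 : n + 1 ≤ l * (n + 1) := Nat.le_mul_of_pos_left (n + 1) hl
  have hnn : n ≤ l * n := Nat.le_mul_of_pos_left n hl
  have hln : l * (n + 1) = l * n + l := by ring
  have hip : i ≤ p ^ (l * (n + 1)) :=
    le_of_lt (lt_of_lt_of_le (Nat.lt_pow_self (n := i) hp.one_lt)
      (Nat.pow_le_pow_right hp.pos (by omega)))
  have hmult := Nat.Prime.emultiplicity_choose_prime_pow hp hip h0.ne'
  apply pow_dvd_of_le_emultiplicity
  rw [hmult]
  have hv : multiplicity p i < n := by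
    have h2 : p ^ multiplicity p i ≤ i := Nat.le_of_dvd h0 (pow_multiplicity_dvd p i)
    have h3 : multiplicity p i < p ^ multiplicity p i := Nat.lt_pow_self hp.one_lt
    omega
  exact_mod_cast Nat.cast_le.2 (by omega : l ≤ l * (n + 1) - multiplicity p i)

lemma aux_mulaut_pow_apply {G : Type} [Group G] (u : MulAut G) (m : ℕ) (g : G) :
    (u ^ m) g = (⇑u)^[m] g := by
  induction m generalizing g with
  | zero => rfl
  | succ m ih => rw [pow_succ', MulAut.mul_apply, Function.iterate_succ_apply', ih]

lemma aux_main {p : ℕ} (hp : p.Prime) (l n : ℕ) :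
    ∀ (d : ℕ) (G : Type) (_ : Group G), (∀ g : G, g ^ p ^ l = 1) → derivedSeries G d = ⊥ →
      ∀ h : MulAut G, (∀ g : G, (fun a => a⁻¹ * h a)^[n] g = 1) →
      ∀ g : G, (h ^ (p ^ l) ^ ((n + 2) * d)) g = g := by
  intro d
  induction d with
  | zero =>
    intro G _ hexp hder h hu g
    have hg : g = 1 := Subgroup.mem_bot.mp
      (by rw [← hder, derivedSeries_zero]; exact Subgroup.mem_top g)
    rw [hg, map_one]
  | succ d ih =>
    intro G _ hexp hder h hu
    -- Step A : abelianization
    set φ : Abelianization G →* Abelianization G := Abelianization.map h.toMonoidHom with hφ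
    have hexpQ : ∀ x : Abelianization G, x ^ p ^ l = 1 := by
      intro x
      refine QuotientGroup.induction_on x ?_
      intro g
      show (Abelianization.of g) ^ p ^ l = 1
      rw [← map_pow, hexp, map_one]
    have hbridge : ∀ (k : ℕ) (g : G),
        (⇑φ)^[k] (Abelianization.of g) = Abelianization.of ((⇑h)^[k] g) := by
      intro k
      induction k with
      | zero => intro g; rfl
      | succ k ihk =>
        intro g
        rw [Function.iterate_succ_apply, Function.iterate_succ_apply]
        rw [hφ, Abelianization.map_of]
        exact ihk (h g)
    have hcbridge : ∀ (k : ℕ) (g : G),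
        (fun x => x⁻¹ * φ x)^[k] (Abelianization.of g)
          = Abelianization.of ((fun a => a⁻¹ * h a)^[k] g) := by
      intro k
      induction k with
      | zero => intro g; rfl
      | succ k ihk =>
        intro g
        simp only [Function.iterate_succ_apply]
        have hstep : (Abelianization.of g)⁻¹ * φ (Abelianization.of g)
            = Abelianization.of (g⁻¹ * h g) := by
          rw [hφ, Abelianization.map_of, map_mul, map_inv]
          rfl
        rw [hstep]
        exact ihk _
    have huQ : ∀ x : Abelianization G, (fun x => x⁻¹ * φ x)^[n] x = 1 := by
      intro x
      refine QuotientGroup.induction_on x ?_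
      intro g
      show (fun x => x⁻¹ * φ x)^[n] (Abelianization.of g) = 1
      rw [hcbridge n g, hu g, map_one]
    have hdvd : ∀ i, 0 < i → i < n → p ^ l ∣ ((p ^ l) ^ (n + 1)).choose i :=
      fun i h1 h2 => aux_dvd hp l n i h1 h2
    have hphi := fun x => aux_abelian_mul (p ^ l) n ((p ^ l) ^ (n + 1)) hexpQ hdvd φ huQ x
    have habel : ∀ g : G, g⁻¹ * ((h ^ (p ^ l) ^ (n + 1)) g) ∈ commutator G := by
      intro g
      have h1 : Abelianization.of ((⇑h)^[(p ^ l) ^ (n + 1)] g) = Abelianization.of g := by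
        rw [← hbridge _ g]
        exact hphi _
      have h2 : Abelianization.of (g⁻¹ * (⇑h)^[(p ^ l) ^ (n + 1)] g) = 1 := by
        rw [map_mul, map_inv, h1, inv_mul_cancel]
      have h3 : g⁻¹ * (⇑h)^[(p ^ l) ^ (n + 1)] g ∈ commutator G :=
        (QuotientGroup.eq_one_iff _).1 h2
      rw [aux_mulaut_pow_apply]
      exact h3
    -- Step B : commutator subgroup
    have hKmap : (commutator G).map h.toMonoidHom = commutator G :=
      Subgroup.characteristic_iff_map_eq.mp inferInstance h
    set e : ↥(commutator G) ≃* ↥(commutator G) :=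
      (MulEquiv.subgroupMap (h : G ≃* G) (commutator G)).trans
        (MulEquiv.subgroupCongr hKmap) with he
    have hecoe : ∀ x : ↥(commutator G), (e x : G) = h (x : G) := fun x => rfl
    have hexpK : ∀ x : ↥(commutator G), x ^ p ^ l = 1 := by
      intro x
      apply Subtype.ext
      push_cast
      exact hexp (x : G)
    have hmapd : ∀ i : ℕ, (derivedSeries ↥(commutator G) i).map (commutator G).subtype
        = derivedSeries G (i + 1) := by
      intro i
      induction i with
      | zero =>
        rw [derivedSeries_zero, ← MonoidHom.range_eq_map, Subgroup.range_subtype,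
          ← derivedSeries_one]
      | succ i ihi =>
        rw [derivedSeries_succ, Subgroup.map_commutator, ihi, ← derivedSeries_succ]
    have hderK : derivedSeries ↥(commutator G) d = ⊥ := by
      have h1 := hmapd d
      rw [hder] at h1
      have h2 := (Subgroup.map_eq_bot_iff _).mp h1
      rw [Subgroup.ker_subtype] at h2
      exact le_bot_iff.mp h2
    have hcoeK : ∀ (k : ℕ) (x : ↥(commutator G)),
        (((fun a => a⁻¹ * e a)^[k] x : ↥(commutator G)) : G)
          = (fun a => a⁻¹ * h a)^[k] (x : G) := by
      intro k
      induction k with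
      | zero => intro x; rfl
      | succ k ihk =>
        intro x
        simp only [Function.iterate_succ_apply]
        have hstep : (x : G)⁻¹ * h (x : G) = ((x⁻¹ * e x : ↥(commutator G)) : G) := by
          rw [Subgroup.coe_mul, Subgroup.coe_inv, hecoe]
        rw [hstep]
        exact ihk _
    have huK : ∀ x : ↥(commutator G), (fun a => a⁻¹ * e a)^[n] x = 1 := by
      intro x
      apply Subtype.ext
      rw [hcoeK n x, hu (x : G)]
      rfl
    have hK := ih ↥(commutator G) _ hexpK hderK e huK
    have hecoepow : ∀ (k : ℕ) (x : ↥(commutator G)),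
        (((⇑e)^[k] x : ↥(commutator G)) : G) = (⇑h)^[k] (x : G) := by
      intro k
      induction k with
      | zero => intro x; rfl
      | succ k ihk =>
        intro x
        rw [Function.iterate_succ_apply, Function.iterate_succ_apply]
        have : ((e x : ↥(commutator G)) : G) = h (x : G) := hecoe x
        rw [← this]
        exact ihk _
    have hfix : ∀ g : G, g ∈ commutator G → (h ^ (p ^ l) ^ ((n + 2) * d)) g = g := by
      intro g hg
      have h1 := hK ⟨g, hg⟩
      have h2 : (((e ^ (p ^ l) ^ ((n + 2) * d)) ⟨g, hg⟩ : ↥(commutator G)) : G)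
          = (h ^ (p ^ l) ^ ((n + 2) * d)) g := by
        rw [aux_mulaut_pow_apply, aux_mulaut_pow_apply]
        exact hecoepow _ _
      rw [← h2, h1]
    -- combine
    intro g
    have step : ∀ (j : ℕ) (g : G),
        g⁻¹ * ((h ^ (p ^ l) ^ (n + 1)) ^ j) g ∈ commutator G := by
      intro j
      induction j with
      | zero =>
        intro g
        rw [pow_zero, MulAut.one_apply, inv_mul_cancel]
        exact Subgroup.one_mem _
      | succ j ihj =>
        intro g
        rw [pow_succ', MulAut.mul_apply]
        have heq : g⁻¹ * (h ^ (p ^ l) ^ (n + 1)) (((h ^ (p ^ l) ^ (n + 1)) ^ j) g)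
            = (g⁻¹ * ((h ^ (p ^ l) ^ (n + 1)) ^ j) g)
              * ((((h ^ (p ^ l) ^ (n + 1)) ^ j) g)⁻¹
                * (h ^ (p ^ l) ^ (n + 1)) (((h ^ (p ^ l) ^ (n + 1)) ^ j) g)) := by
          group
        rw [heq]
        exact mul_mem (ihj g) (habel _)
    have hcK : ∀ g : G,
        g⁻¹ * (h ^ ((p ^ l) ^ (n + 1) * (p ^ l) ^ ((n + 2) * d))) g ∈ commutator G := by
      intro g
      rw [pow_mul]
      exact step _ g
    have hfixK : ∀ g : G, g ∈ commutator G →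
        (h ^ ((p ^ l) ^ (n + 1) * (p ^ l) ^ ((n + 2) * d))) g = g := by
      intro g hg
      rw [pow_mul']
      have : ∀ j : ℕ, ((h ^ (p ^ l) ^ ((n + 2) * d)) ^ j) g = g := by
        intro j
        induction j with
        | zero => rw [pow_zero, MulAut.one_apply]
        | succ j ihj => rw [pow_succ, MulAut.mul_apply, hfix g hg, ihj]
      exact this _
    have hexpo : (p ^ l) ^ ((n + 2) * (d + 1))
        = ((p ^ l) ^ (n + 1) * (p ^ l) ^ ((n + 2) * d)) * p ^ l := by
      rw [← pow_add, ← pow_succ]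
      congr 1
      ring
    rw [hexpo, pow_mul]
    have key : ∀ j : ℕ,
        ((h ^ ((p ^ l) ^ (n + 1) * (p ^ l) ^ ((n + 2) * d))) ^ j) g
          = g * (g⁻¹ * (h ^ ((p ^ l) ^ (n + 1) * (p ^ l) ^ ((n + 2) * d))) g) ^ j := by
      intro j
      induction j with
      | zero => rw [pow_zero, MulAut.one_apply, pow_zero, mul_one]
      | succ j ihj =>
        rw [pow_succ' _ j, MulAut.mul_apply, ihj, map_mul, map_pow, hfixK _ (hcK g),
          pow_succ' (g⁻¹ * (h ^ ((p ^ l) ^ (n + 1) * (p ^ l) ^ ((n + 2) * d))) g) j,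
          ← mul_assoc, mul_inv_cancel_left]
    rw [key, hexp, mul_one]
/-- The exponent of a group of `n`-unipotent automorphisms of a solvable `p`-group of
exponent `p^l` and derived length `d` is bounded by a function `f(p^l, n, d)`. -/
theorem stmt_6 :
    ∃ f : ℕ → ℕ → ℕ → ℕ, (∀ q n d, 0 < f q n d) ∧
      ∀ (p l n d : ℕ), p.Prime →
        ∀ (G : Type) (_ : Group G),
          (∀ g : G, g ^ p ^ l = 1) →
          derivedSeries G d = ⊥ →
          ∀ H : Subgroup (MulAut G),
            (∀ h ∈ H, ∀ g : G, (fun a => a⁻¹ * h a)^[n] g = 1) →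
            ∀ h ∈ H, h ^ f (p ^ l) n d = 1 := by
  refine ⟨fun q n d => (max q 1) ^ ((n + 2) * d), fun q n d => pow_pos ?_ _, ?_⟩
  · exact Nat.lt_of_lt_of_le Nat.zero_lt_one (le_max_right q 1)
  · intro p l n d hp G _ hexp hder H hH h hmem
    have hmax : max (p ^ l) 1 = p ^ l := max_eq_left (Nat.one_le_pow l p hp.pos)
    have key := aux_main hp l n d G _ hexp hder h (hH h hmem)
    refine MulEquiv.ext fun g => ?_
    show (h ^ (max (p ^ l) 1) ^ ((n + 2) * d)) g = (1 : MulAut G) g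
    rw [hmax, key g]
    exact (MulAut.one_apply G g).symm
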